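/- In the discrete-time uniprocessor preemptive fixed-priority scheduling model, let w and r be two tasks with π(w) > π(r), let J_w = J_w^{k_w} and J_r = J_r^{k_r} be jobs with release times satisfying r(w,k_w) ≤ r(r,k_r), and suppose J_w finishes, i.e., f_C(w,k_w) < ⊤. Then J_r is never served before J_w finishes: s_C(r,k_r) ≥ f_C(w,k_w). In other words, assigning the reading job a release time no earlier than its writing job's release time and a strictly lower priority enforces the Read-After-Write execution dependency (the reader starts only after the writer finishes) without departing from time-triggered fixed-priority scheduling. -/

import Mathlib

open scoped BigOperators

/-- Release time of the `k`-th job of task `i`: `r(i,k) = O i + k · T i`. -/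
def release {ι : Type} (O T : ι → ℕ) (i : ι) (k : ℕ) : ℕ := O i + k * T i

open Classical in
/-- Service received by job `j` during `[rel, t)` under schedule `σ`: the number of
instants in `[rel, t)` at which `σ` serves `j`. -/
noncomputable def service {ι : Type} (σ : ℕ → Option (ι × ℕ)) (rel : ℕ)
    (j : ι × ℕ) (t : ℕ) : ℕ :=
  ((Finset.Ico rel t).filter (fun u => σ u = some j)).card

/-- Job `j = (i,k)` is pending at time `t`: it is released at or before `t` and has
received strictly fewer units of service than its requirement during `[r(i,k), t)`. -/
def Pending {ι : Type} (O T : ι → ℕ) (C : ι → ℕ → ℕ) (σ : ℕ → Option (ι × ℕ))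
    (j : ι × ℕ) (t : ℕ) : Prop :=
  release O T j.1 j.2 ≤ t ∧ service σ (release O T j.1 j.2) j t < C j.1 j.2

/-- `σ` is the preemptive fixed-priority schedule for requirements `C`: at each instant `t`
it serves nothing if no job is pending, and otherwise serves a pending job of the task of
highest priority among tasks with a pending job, choosing among pending jobs of that task
one with earliest release time. -/
def IsFPSchedule {ι : Type} (π O T : ι → ℕ) (C : ι → ℕ → ℕ)
    (σ : ℕ → Option (ι × ℕ)) : Prop :=
  ∀ t : ℕ,
    ((¬ ∃ j, Pending O T C σ j t) → σ t = none) ∧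
    ((∃ j, Pending O T C σ j t) →
      ∃ j, σ t = some j ∧ Pending O T C σ j t ∧
        (∀ j', Pending O T C σ j' t → π j'.1 ≤ π j.1) ∧
        (∀ k' : ℕ, Pending O T C σ (j.1, k') t →
          release O T j.1 j.2 ≤ release O T j.1 k'))

/-- Start time of job `j` under schedule `σ`: the first instant at which `j` is served
(`⊤` if `j` is never served). -/
noncomputable def startTime {ι : Type} (σ : ℕ → Option (ι × ℕ)) (j : ι × ℕ) : ℕ∞ :=
  sInf {t : ℕ∞ | ∃ u : ℕ, t = (u : ℕ∞) ∧ σ u = some j}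

/-- Finish time of job `j = (i,k)` under schedule `σ` with requirements `C`: the least `t`
such that `j` has received `C i k` units of service during `[r(i,k), t)` (`⊤` if no such
instant exists). -/
noncomputable def finishTime {ι : Type} (O T : ι → ℕ) (C : ι → ℕ → ℕ)
    (σ : ℕ → Option (ι × ℕ)) (j : ι × ℕ) : ℕ∞ :=
  sInf {t : ℕ∞ | ∃ u : ℕ, t = (u : ℕ∞) ∧
    service σ (release O T j.1 j.2) j u = C j.1 j.2}

lemma service_step {ι : Type} (σ : ℕ → Option (ι × ℕ)) (rel : ℕ) (j : ι × ℕ) (t : ℕ) :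
    service σ rel j (t + 1) ≤ service σ rel j t + 1 := by
  classical
  unfold service
  refine le_trans (Finset.card_le_card ?_) (Finset.card_insert_le t _)
  intro x hx
  simp only [Finset.mem_filter, Finset.mem_Ico] at hx
  rcases hx with ⟨⟨h1, h2⟩, h3⟩
  rcases eq_or_lt_of_le (Nat.lt_succ_iff.mp h2) with h | h
  · rw [h]; exact Finset.mem_insert_self t _
  · refine Finset.mem_insert_of_mem ?_
    simp only [Finset.mem_filter, Finset.mem_Ico]
    exact ⟨⟨h1, h⟩, h3⟩

lemma service_hits {ι : Type} (σ : ℕ → Option (ι × ℕ)) (rel : ℕ) (j : ι × ℕ)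
    (c u : ℕ) (hu : c ≤ service σ rel j u) : ∃ t ≤ u, service σ rel j t = c := by
  induction u with
  | zero =>
    have h0 : service σ rel j 0 = 0 := by
      simp [service, Finset.Ico_eq_empty (Nat.not_lt_zero rel)]
    exact ⟨0, le_refl _, by omega⟩
  | succ n ih =>
    by_cases h : c ≤ service σ rel j n
    · obtain ⟨t, ht, h⟩ := ih h
      exact ⟨t, ht.trans (Nat.le_succ n), h⟩
    · have := service_step σ rel j n
      exact ⟨n + 1, le_refl _, by omega⟩

/-- **Read-After-Write via release times and priorities.**  Let `w` and `r` be tasks with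
`π w > π r`, and let `J_w = J_w^{k_w}` and `J_r = J_r^{k_r}` be jobs with
`r(w,k_w) ≤ r(r,k_r)`, where `J_w` finishes.  Then under the preemptive fixed-priority
schedule, `J_r` is never served before `J_w` finishes: `s(r,k_r) ≥ f(w,k_w)`.  Thus
assigning the reading job a release no earlier than its writing job's release and a
strictly lower priority enforces the Read-After-Write execution dependency within
time-triggered fixed-priority scheduling. -/
theorem read_after_write_by_release_and_priority {ι : Type} [Fintype ι]
    (π O T : ι → ℕ) (hπ : Function.Injective π) (hT : ∀ i, 1 ≤ T i)
    (C : ι → ℕ → ℕ) (hC : ∀ i k, 1 ≤ C i k)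
    (σ : ℕ → Option (ι × ℕ)) (hσ : IsFPSchedule π O T C σ)
    (w r : ι) (hpri : π r < π w) (kw kr : ℕ)
    (hrel : release O T w kw ≤ release O T r kr)
    (hfin : finishTime O T C σ (w, kw) < ⊤) :
    finishTime O T C σ (w, kw) ≤ startTime σ (r, kr) := by
  refine le_sInf ?_
  rintro x ⟨u, rfl, hu⟩
  by_contra hlt
  have hlt : (u : ℕ∞) < finishTime O T C σ (w, kw) := lt_of_not_ge hlt
  -- service of (w,kw) at u is < C w kw
  have hserv : service σ (release O T w kw) (w, kw) u < C w kw := by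
    by_contra hge
    push_neg at hge
    obtain ⟨t, htu, ht⟩ := service_hits σ (release O T w kw) (w, kw) (C w kw) u hge
    have : finishTime O T C σ (w, kw) ≤ (t : ℕ∞) := sInf_le ⟨t, rfl, ht⟩
    exact absurd (this.trans (by exact_mod_cast htu)) (not_le_of_gt hlt)
  -- the schedule serves (r,kr) at u, so (r,kr) is pending at u
  obtain ⟨hnone, hsome⟩ := hσ u
  by_cases hp : ∃ j, Pending O T C σ j u
  · obtain ⟨j, hj, hjpend, hmax, _⟩ := hsome hp
    have hjrk : j = (r, kr) := by
      rw [hu] at hj; exact (Option.some.inj hj).symm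
    subst hjrk
    have hrelu : release O T w kw ≤ u := hrel.trans hjpend.1
    have hwpend : Pending O T C σ (w, kw) u := ⟨hrelu, hserv⟩
    have := hmax (w, kw) hwpend
    simp at this
    omega
  · rw [hnone hp] at hu
    exact absurd hu.symm (Option.some_ne_none _)
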